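/- Let X be a compact metric space, r : X → X a continuous, surjective, finite-to-one map, and W a continuous nonnegative function on X with R_W 1 = 1, such that R_W f is continuous whenever f is continuous. Then a measure ν in the set M_inv of R_W-invariant probability measures is an extreme point of M_inv if and only if ν is ergodic with respect to r (i.e. every Borel set A with r⁻¹(A) = A has ν(A) ∈ {0,1}). -/

import Mathlib

open MeasureTheory Filter Topology

/-- The Ruelle transfer operator `R_W f (x) = ∑_{y ∈ r⁻¹(x)} W(y) f(y)`. -/
noncomputable def RuelleOp {X : Type*} (r : X → X) (W : X → ℝ) (f : X → ℝ) (x : X) : ℝ :=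
  ∑ᶠ y ∈ r ⁻¹' {x}, W y * f y

/-- The set of `R_W`-invariant Borel probability measures. -/
def MinvSet {X : Type*} [MetricSpace X] [MeasurableSpace X]
    (r : X → X) (W : X → ℝ) : Set (Measure X) :=
  {ν | IsProbabilityMeasure ν ∧ ∀ f : X → ℝ, Continuous f →
    (∫ x, RuelleOp r W f x ∂ν) = ∫ x, f x ∂ν}

section RuelleHelpers

variable {X : Type*} {r : X → X} {W : X → ℝ}

lemma RuelleAux.ruelle_sum (hr_fin : ∀ x : X, (r ⁻¹' {x}).Finite) (f : X → ℝ) (x : X) :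
    RuelleOp r W f x = ∑ y ∈ (hr_fin x).toFinset, W y * f y := by
  rw [RuelleOp, finsum_mem_eq_finite_toFinset_sum _ (hr_fin x)]

lemma RuelleAux.hW1_sum (hr_fin : ∀ x : X, (r ⁻¹' {x}).Finite)
    (hW1 : ∀ x : X, (∑ᶠ y ∈ r ⁻¹' {x}, W y) = 1) (x : X) :
    (∑ y ∈ (hr_fin x).toFinset, W y) = 1 := by
  rw [← finsum_mem_eq_finite_toFinset_sum _ (hr_fin x)]; exact hW1 x

lemma RuelleAux.ruelle_comp (hr_fin : ∀ x : X, (r ⁻¹' {x}).Finite)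
    (hW1 : ∀ x : X, (∑ᶠ y ∈ r ⁻¹' {x}, W y) = 1) (f : X → ℝ) (x : X) :
    RuelleOp r W (fun y => f (r y)) x = f x := by
  rw [RuelleAux.ruelle_sum hr_fin]
  have : ∀ y ∈ (hr_fin x).toFinset, W y * f (r y) = W y * f x := by
    intro y hy
    have : r y = x := by simpa using (hr_fin x).mem_toFinset.mp hy
    rw [this]
  rw [Finset.sum_congr rfl this, ← Finset.sum_mul, RuelleAux.hW1_sum hr_fin hW1, one_mul]

lemma RuelleAux.ruelle_mul_comp (hr_fin : ∀ x : X, (r ⁻¹' {x}).Finite) (f g : X → ℝ) (x : X) :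
    RuelleOp r W (fun y => f y * g (r y)) x = RuelleOp r W f x * g x := by
  rw [RuelleAux.ruelle_sum hr_fin, RuelleAux.ruelle_sum hr_fin, Finset.sum_mul]
  apply Finset.sum_congr rfl
  intro y hy
  have : r y = x := by simpa using (hr_fin x).mem_toFinset.mp hy
  rw [this]; ring

lemma RuelleAux.ruelle_add_const (hr_fin : ∀ x : X, (r ⁻¹' {x}).Finite)
    (hW1 : ∀ x : X, (∑ᶠ y ∈ r ⁻¹' {x}, W y) = 1) (f : X → ℝ) (c : ℝ) (x : X) :
    RuelleOp r W (fun y => f y + c) x = RuelleOp r W f x + c := by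
  rw [RuelleAux.ruelle_sum hr_fin, RuelleAux.ruelle_sum hr_fin]
  have : ∀ y ∈ (hr_fin x).toFinset, W y * (f y + c) = W y * f y + W y * c := by
    intro y _; ring
  rw [Finset.sum_congr rfl this, Finset.sum_add_distrib, ← Finset.sum_mul,
    RuelleAux.hW1_sum hr_fin hW1, one_mul]

lemma RuelleAux.ruelle_nonneg (hr_fin : ∀ x : X, (r ⁻¹' {x}).Finite) (hW_nonneg : ∀ x, 0 ≤ W x)
    {f : X → ℝ} (hf : ∀ x, 0 ≤ f x) (x : X) : 0 ≤ RuelleOp r W f x := by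
  rw [RuelleAux.ruelle_sum hr_fin]
  exact Finset.sum_nonneg fun y _ => mul_nonneg (hW_nonneg y) (hf y)


end RuelleHelpers

section MeasureHelpers

variable {X : Type*} [MetricSpace X] [CompactSpace X] [MeasurableSpace X] [BorelSpace X]
variable {r : X → X} {W : X → ℝ}

lemma RuelleAux.cont_integrable {f : X → ℝ} (hf : Continuous f) (μ : Measure X) [IsFiniteMeasure μ] :
    Integrable f μ := by
  rw [← integrableOn_univ]
  exact hf.continuousOn.integrableOn_compact isCompact_univ

lemma RuelleAux.map_eq (hr_cont : Continuous r) (hr_fin : ∀ x : X, (r ⁻¹' {x}).Finite)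
    (hW1 : ∀ x : X, (∑ᶠ y ∈ r ⁻¹' {x}, W y) = 1)
    {μ : Measure X} (hμ : μ ∈ MinvSet r W) :
    Measure.map r μ = μ := by
  haveI := hμ.1
  haveI : IsProbabilityMeasure (Measure.map r μ) :=
    Measure.isProbabilityMeasure_map hr_cont.measurable.aemeasurable
  apply ext_of_forall_lintegral_eq_of_IsFiniteMeasure
  intro g
  rw [lintegral_map (g := r) (f := fun x => ((g x : ENNReal)))
    (measurable_coe_nnreal_ennreal.comp g.continuous.measurable) hr_cont.measurable]
  have hgc : Continuous fun x => ((g x : ℝ)) := NNReal.continuous_coe.comp g.continuous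
  rw [lintegral_coe_eq_integral (fun x => g (r x))
    (RuelleAux.cont_integrable (hgc.comp hr_cont) μ),
    lintegral_coe_eq_integral (fun x => g x) (RuelleAux.cont_integrable hgc μ)]
  congr 1
  have h := hμ.2 (fun x => (g (r x) : ℝ)) (hgc.comp hr_cont)
  have h2 : RuelleOp r W (fun x => (g (r x) : ℝ)) = fun x => (g x : ℝ) :=
    funext (RuelleAux.ruelle_comp hr_fin hW1 (fun x => (g x : ℝ)))
  rw [h2] at h
  exact h.symm

lemma RuelleAux.key_nonneg (hr_cont : Continuous r) (hr_fin : ∀ x : X, (r ⁻¹' {x}).Finite)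
    (hW_nonneg : ∀ x, 0 ≤ W x)
    (hRW_cont : ∀ f : X → ℝ, Continuous f → Continuous (RuelleOp r W f))
    {μ : Measure X} (hμ : μ ∈ MinvSet r W)
    {f : X → ℝ} (hf : Continuous f) (hf0 : ∀ x, 0 ≤ f x)
    {A : Set X} (hA : MeasurableSet A) (hrA : r ⁻¹' A = A) :
    ∫ x in A, RuelleOp r W f x ∂μ = ∫ x in A, f x ∂μ := by
  haveI := hμ.1
  have hRfc : Continuous (RuelleOp r W f) := hRW_cont f hf
  have hRf0 : ∀ x, 0 ≤ RuelleOp r W f x := RuelleAux.ruelle_nonneg hr_fin hW_nonneg hf0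
  set μ₁ := μ.withDensity (fun x => ENNReal.ofReal (RuelleOp r W f x)) with hμ₁
  set μ₂ := (μ.withDensity (fun x => ENNReal.ofReal (f x))).map r with hμ₂
  have hmRf : Measurable (fun x => ENNReal.ofReal (RuelleOp r W f x)) :=
    ENNReal.measurable_ofReal.comp hRfc.measurable
  have hmf : Measurable (fun x => ENNReal.ofReal (f x)) :=
    ENNReal.measurable_ofReal.comp hf.measurable
  haveI : IsFiniteMeasure μ₁ := by
    apply isFiniteMeasure_withDensity
    rw [← ofReal_integral_eq_lintegral_ofReal (RuelleAux.cont_integrable hRfc μ)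
      (Eventually.of_forall hRf0)]
    exact ENNReal.ofReal_ne_top
  have hμeq : μ₁ = μ₂ := by
    apply ext_of_forall_lintegral_eq_of_IsFiniteMeasure
    intro g
    have hgc : Continuous fun x => ((g x : ℝ)) := NNReal.continuous_coe.comp g.continuous
    have hgm : Measurable fun x => ((g x : ENNReal)) :=
      measurable_coe_nnreal_ennreal.comp g.continuous.measurable
    rw [hμ₁, hμ₂,
      lintegral_withDensity_eq_lintegral_mul μ hmRf hgm,
      lintegral_map (g := r) (f := fun x => ((g x : ENNReal))) hgm hr_cont.measurable,
      lintegral_withDensity_eq_lintegral_mul μ (g := fun x => ((g (r x) : ENNReal))) hmf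
        (hgm.comp hr_cont.measurable)]
    have l1 : ∀ x, ((fun x => ENNReal.ofReal (RuelleOp r W f x)) * fun x => ((g x : ENNReal))) x
        = ENNReal.ofReal (RuelleOp r W f x * (g x : ℝ)) := by
      intro x
      simp only [Pi.mul_apply]
      rw [ENNReal.ofReal_mul (hRf0 x), ENNReal.ofReal_coe_nnreal]
    have l2 : ∀ x, ((fun x => ENNReal.ofReal (f x)) * fun x => ((g (r x) : ENNReal))) x
        = ENNReal.ofReal (f x * (g (r x) : ℝ)) := by
      intro x
      simp only [Pi.mul_apply]
      rw [ENNReal.ofReal_mul (hf0 x), ENNReal.ofReal_coe_nnreal]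
    simp_rw [l1, l2]
    rw [← ofReal_integral_eq_lintegral_ofReal (f := fun x => RuelleOp r W f x * (g x : ℝ))
        (RuelleAux.cont_integrable (hRfc.mul hgc) μ)
        (Eventually.of_forall fun x => mul_nonneg (hRf0 x) (g x).coe_nonneg),
      ← ofReal_integral_eq_lintegral_ofReal (f := fun x => f x * (g (r x) : ℝ))
        (RuelleAux.cont_integrable (hf.mul (hgc.comp hr_cont)) μ)
        (Eventually.of_forall fun x => mul_nonneg (hf0 x) (g (r x)).coe_nonneg)]
    congr 1
    have h := hμ.2 (fun y => f y * (g (r y) : ℝ)) (hf.mul (hgc.comp hr_cont))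
    have h2 : RuelleOp r W (fun y => f y * (fun x => (g x : ℝ)) (r y))
        = fun x => RuelleOp r W f x * (g x : ℝ) :=
      funext (RuelleAux.ruelle_mul_comp hr_fin f (fun x => (g x : ℝ)))
    rw [h2] at h
    exact h
  have h1 : μ₁ A = μ₂ A := by rw [hμeq]
  rw [hμ₁, withDensity_apply _ hA] at h1
  rw [hμ₂, Measure.map_apply hr_cont.measurable hA, hrA, withDensity_apply _ hA] at h1
  rw [integral_eq_lintegral_of_nonneg_ae (Eventually.of_forall hRf0)
      (hRfc.aestronglyMeasurable),
    integral_eq_lintegral_of_nonneg_ae (Eventually.of_forall hf0)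
      (hf.aestronglyMeasurable), h1]

lemma RuelleAux.key_id (hr_cont : Continuous r) (hr_fin : ∀ x : X, (r ⁻¹' {x}).Finite)
    (hW_nonneg : ∀ x, 0 ≤ W x)
    (hW1 : ∀ x : X, (∑ᶠ y ∈ r ⁻¹' {x}, W y) = 1)
    (hRW_cont : ∀ f : X → ℝ, Continuous f → Continuous (RuelleOp r W f))
    {μ : Measure X} (hμ : μ ∈ MinvSet r W)
    {f : X → ℝ} (hf : Continuous f)
    {A : Set X} (hA : MeasurableSet A) (hrA : r ⁻¹' A = A) :
    ∫ x in A, RuelleOp r W f x ∂μ = ∫ x in A, f x ∂μ := by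
  haveI := hμ.1
  set C : ℝ := ‖BoundedContinuousFunction.mkOfCompact ⟨f, hf⟩‖ with hC
  have hbd : ∀ x, 0 ≤ f x + C := by
    intro x
    have := BoundedContinuousFunction.norm_coe_le_norm
      (BoundedContinuousFunction.mkOfCompact ⟨f, hf⟩) x
    rw [show (BoundedContinuousFunction.mkOfCompact ⟨f, hf⟩) x = f x from rfl,
      Real.norm_eq_abs] at this
    have h' := abs_le.mp this
    linarith [h'.1]
  have h := RuelleAux.key_nonneg hr_cont hr_fin hW_nonneg hRW_cont hμ (f := fun y => f y + C)
    (hf.add continuous_const) hbd hA hrA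
  have h2 : RuelleOp r W (fun y => f y + C) = fun x => RuelleOp r W f x + C :=
    funext (RuelleAux.ruelle_add_const hr_fin hW1 f C)
  rw [h2] at h
  rw [integral_add ((RuelleAux.cont_integrable (hRW_cont f hf) μ).restrict) (integrable_const C),
    integral_add ((RuelleAux.cont_integrable hf μ).restrict) (integrable_const C)] at h
  linarith [h]

lemma RuelleAux.restrict_mem (hr_cont : Continuous r) (hr_fin : ∀ x : X, (r ⁻¹' {x}).Finite)
    (hW_nonneg : ∀ x, 0 ≤ W x)
    (hW1 : ∀ x : X, (∑ᶠ y ∈ r ⁻¹' {x}, W y) = 1)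
    (hRW_cont : ∀ f : X → ℝ, Continuous f → Continuous (RuelleOp r W f))
    {ν : Measure X} (hν : ν ∈ MinvSet r W)
    {A : Set X} (hA : MeasurableSet A) (hrA : r ⁻¹' A = A) (h0 : ν A ≠ 0) :
    (ν A)⁻¹ • ν.restrict A ∈ MinvSet r W := by
  haveI := hν.1
  have hfin : ν A ≠ ⊤ := measure_ne_top ν A
  refine ⟨⟨?_⟩, ?_⟩
  · rw [Measure.smul_apply, Measure.restrict_apply MeasurableSet.univ, Set.univ_inter,
      smul_eq_mul, ENNReal.inv_mul_cancel h0 hfin]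
  · intro f hf
    rw [integral_smul_measure, integral_smul_measure]
    congr 1
    exact RuelleAux.key_id hr_cont hr_fin hW_nonneg hW1 hRW_cont hν hf hA hrA

lemma RuelleAux.eq_of_ac (hr_cont : Continuous r) (hr_fin : ∀ x : X, (r ⁻¹' {x}).Finite)
    (hW1 : ∀ x : X, (∑ᶠ y ∈ r ⁻¹' {x}, W y) = 1)
    {ν : Measure X} (hν : ν ∈ MinvSet r W)
    (herg : ∀ A : Set X, MeasurableSet A → r ⁻¹' A = A → ν A = 0 ∨ ν A = 1)
    {μ : Measure X} (hμ : μ ∈ MinvSet r W) (hac : μ ≪ ν) : μ = ν := by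
  haveI := hν.1
  haveI := hμ.1
  have hrm : Measurable r := hr_cont.measurable
  have hmpν : MeasurePreserving r ν ν := ⟨hrm, RuelleAux.map_eq hr_cont hr_fin hW1 hν⟩
  have hergν : Ergodic r ν := by
    refine ⟨hmpν, ⟨fun s hs hrs => ?_⟩⟩
    rw [Filter.eventuallyConst_set']
    rcases herg s hs hrs with h0 | h1
    · exact Or.inl (ae_eq_empty.mpr h0)
    · exact Or.inr (ae_eq_univ.mpr ((prob_compl_eq_zero_iff hs).mpr h1))
  set h := μ.rnDeriv ν with hh_def
  have hh : Measurable h := Measure.measurable_rnDeriv μ ν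
  have hwd : ν.withDensity h = μ := Measure.withDensity_rnDeriv_eq μ ν hac
  have hint : ∫⁻ x, h x ∂ν = 1 := by
    have := congrArg (fun m : Measure X => m Set.univ) hwd
    rw [withDensity_apply _ MeasurableSet.univ, Measure.restrict_univ] at this
    rw [this, measure_univ]
  have hmpμ : Measure.map r μ = μ := RuelleAux.map_eq hr_cont hr_fin hW1 hμ
  -- dichotomy for sublevel sets
  have key01 : ∀ t : ENNReal, ν {x | h x < t} = 0 ∨ ν {x | h x < t} = 1 := by
    intro t
    set A := {x | h x < t} with hAdef
    have hA : MeasurableSet A := measurableSet_lt hh measurable_const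
    have hνA : ν (r ⁻¹' A) = ν A := by
      conv_rhs => rw [← hmpν.map_eq]
      rw [Measure.map_apply hrm hA]
    have hμA : μ (r ⁻¹' A) = μ A := by
      conv_rhs => rw [← hmpμ]
      rw [Measure.map_apply hrm hA]
    have hrmA : MeasurableSet (r ⁻¹' A) := hrm hA
    -- ν E = ν F and μ E = μ F
    have eν : ν (A \ r ⁻¹' A) = ν (r ⁻¹' A \ A) := by
      have e1 : ν (A ∩ r ⁻¹' A) + ν (A \ r ⁻¹' A) = ν A := measure_inter_add_diff A hrmA
      have e2 : ν (r ⁻¹' A ∩ A) + ν (r ⁻¹' A \ A) = ν (r ⁻¹' A) := measure_inter_add_diff _ hA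
      rw [Set.inter_comm] at e2
      rw [hνA, ← e1] at e2
      exact (ENNReal.add_right_inj (measure_ne_top ν _)).mp e2.symm
    have eμ : μ (A \ r ⁻¹' A) = μ (r ⁻¹' A \ A) := by
      have e1 : μ (A ∩ r ⁻¹' A) + μ (A \ r ⁻¹' A) = μ A := measure_inter_add_diff A hrmA
      have e2 : μ (r ⁻¹' A ∩ A) + μ (r ⁻¹' A \ A) = μ (r ⁻¹' A) := measure_inter_add_diff _ hA
      rw [Set.inter_comm] at e2
      rw [hμA, ← e1] at e2
      exact (ENNReal.add_right_inj (measure_ne_top μ _)).mp e2.symm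
    have hE0 : ν (A \ r ⁻¹' A) = 0 := by
      by_contra hE0
      have hEm : MeasurableSet (A \ r ⁻¹' A) := hA.diff hrmA
      have hFm : MeasurableSet (r ⁻¹' A \ A) := hrmA.diff hA
      have hμE : μ (A \ r ⁻¹' A) = ∫⁻ x in A \ r ⁻¹' A, h x ∂ν := by
        rw [← hwd, withDensity_apply _ hEm]
      have hμF : μ (r ⁻¹' A \ A) = ∫⁻ x in r ⁻¹' A \ A, h x ∂ν := by
        rw [← hwd, withDensity_apply _ hFm]
      have hfin' : ∫⁻ x in A \ r ⁻¹' A, h x ∂ν ≠ ⊤ := by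
        rw [← hμE]; exact measure_ne_top μ _
      have lt1 : ∫⁻ x in A \ r ⁻¹' A, h x ∂ν < ∫⁻ _x in A \ r ⁻¹' A, t ∂ν := by
        refine setLIntegral_strict_mono hEm hE0 measurable_const hfin' ?_
        exact Eventually.of_forall fun x hx => hx.1
      have le2 : ∫⁻ _x in r ⁻¹' A \ A, t ∂ν ≤ ∫⁻ x in r ⁻¹' A \ A, h x ∂ν := by
        refine setLIntegral_mono hh fun x hx => ?_
        exact not_lt.mp hx.2
      have : μ (A \ r ⁻¹' A) < μ (A \ r ⁻¹' A) := by
        calc μ (A \ r ⁻¹' A) = ∫⁻ x in A \ r ⁻¹' A, h x ∂ν := hμE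
        _ < t * ν (A \ r ⁻¹' A) := by rw [← setLIntegral_const]; exact lt1
        _ = t * ν (r ⁻¹' A \ A) := by rw [eν]
        _ ≤ ∫⁻ x in r ⁻¹' A \ A, h x ∂ν := by rw [← setLIntegral_const]; exact le2
        _ = μ (r ⁻¹' A \ A) := hμF.symm
        _ = μ (A \ r ⁻¹' A) := eμ.symm
      exact absurd this (lt_irrefl _)
    have hF0 : ν (r ⁻¹' A \ A) = 0 := by rw [← eν]; exact hE0
    have hae : r ⁻¹' A =ᵐ[ν] A := ae_eq_set.mpr ⟨hF0, hE0⟩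
    rcases hergν.quasiErgodic.ae_empty_or_univ₀ hA.nullMeasurableSet hae with h1 | h2
    · left
      rw [measure_congr h1, measure_empty]
    · right
      rw [measure_congr h2, measure_univ]
  -- h ≥ 1 a.e.
  have hne : ν ≠ 0 := IsProbabilityMeasure.ne_zero ν
  have hge1 : ∀ᵐ x ∂ν, 1 ≤ h x := by
    rcases key01 1 with h0 | h1
    · rw [ae_iff]
      simpa only [not_le] using h0
    · exfalso
      have hlt : ∀ᵐ x ∂ν, h x < 1 := by
        have hA : MeasurableSet {x | h x < 1} := measurableSet_lt hh measurable_const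
        have := (prob_compl_eq_zero_iff hA).mpr h1
        rw [ae_iff]
        convert this using 2
        rfl
      have : ∫⁻ x, h x ∂ν < ∫⁻ _x, (1 : ENNReal) ∂ν := by
        refine lintegral_strict_mono hne measurable_const.aemeasurable ?_ hlt
        rw [hint]; exact ENNReal.one_ne_top
      rw [hint, lintegral_one, measure_univ] at this
      exact absurd this (lt_irrefl _)
  -- h ≤ 1 a.e.
  have hub : ∀ n : ℕ, ∀ᵐ x ∂ν, h x < 1 + ((n : ENNReal) + 1)⁻¹ := by
    intro n
    have hpos : ((n : ENNReal) + 1)⁻¹ ≠ 0 := by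
      simp [ENNReal.inv_ne_zero]
    rcases key01 (1 + ((n : ENNReal) + 1)⁻¹) with h0 | h1
    · exfalso
      have hge : ∀ᵐ x ∂ν, 1 + ((n : ENNReal) + 1)⁻¹ ≤ h x := by
        rw [ae_iff]
        simpa only [not_le] using h0
      have : 1 + ((n : ENNReal) + 1)⁻¹ ≤ ∫⁻ x, h x ∂ν := by
        calc 1 + ((n : ENNReal) + 1)⁻¹
            = ∫⁻ _x, (1 + ((n : ENNReal) + 1)⁻¹) ∂ν := by
              rw [lintegral_const, measure_univ, mul_one]
        _ ≤ ∫⁻ x, h x ∂ν := lintegral_mono_ae hge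
      rw [hint] at this
      have hlt : (1 : ENNReal) < 1 + ((n : ENNReal) + 1)⁻¹ :=
        ENNReal.lt_add_right ENNReal.one_ne_top hpos
      exact absurd (lt_of_lt_of_le hlt this) (lt_irrefl _)
    · have hA : MeasurableSet {x | h x < 1 + ((n : ENNReal) + 1)⁻¹} :=
        measurableSet_lt hh measurable_const
      have := (prob_compl_eq_zero_iff hA).mpr h1
      rw [ae_iff]
      convert this using 2
      rfl
  have hle1 : ∀ᵐ x ∂ν, h x ≤ 1 := by
    have hall : ∀ᵐ x ∂ν, ∀ n : ℕ, h x < 1 + ((n : ENNReal) + 1)⁻¹ := ae_all_iff.mpr hub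
    filter_upwards [hall] with x hx
    refine ENNReal.le_of_forall_pos_le_add fun ε hε _ => ?_
    obtain ⟨n, hn⟩ := ENNReal.exists_inv_nat_lt (ne_of_gt (by exact_mod_cast hε) :
      (ε : ENNReal) ≠ 0)
    have h1 : ((n : ENNReal) + 1)⁻¹ ≤ ((n : ENNReal))⁻¹ := by
      gcongr
      exact le_self_add
    calc h x ≤ 1 + ((n : ENNReal) + 1)⁻¹ := (hx n).le
    _ ≤ 1 + (ε : ENNReal) := by gcongr; exact h1.trans hn.le
  have heq : h =ᵐ[ν] fun _ => (1 : ENNReal) := by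
    filter_upwards [hge1, hle1] with x h1 h2
    exact le_antisymm h2 h1
  rw [← hwd, withDensity_congr_ae heq]
  simp [withDensity_one (μ := ν)]


end MeasureHelpers

theorem stmt4
    {X : Type*} [MetricSpace X] [CompactSpace X] [MeasurableSpace X] [BorelSpace X]
    (r : X → X) (hr_cont : Continuous r) (hr_surj : Function.Surjective r)
    (hr_fin : ∀ x : X, (r ⁻¹' {x}).Finite)
    (W : X → ℝ) (hW_cont : Continuous W) (hW_nonneg : ∀ x, 0 ≤ W x)
    (hW1 : ∀ x : X, (∑ᶠ y ∈ r ⁻¹' {x}, W y) = 1)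
    (hRW_cont : ∀ f : X → ℝ, Continuous f → Continuous (RuelleOp r W f))
    (ν : Measure X) (hν : ν ∈ MinvSet r W) :
    -- `ν` is an extreme point of `M_inv`
    (∀ ν₁ ∈ MinvSet r W, ∀ ν₂ ∈ MinvSet r W, ∀ a b : NNReal,
        0 < a → 0 < b → a + b = 1 → ν = a • ν₁ + b • ν₂ → ν₁ = ν₂)
    ↔
    -- if and only if `ν` is ergodic with respect to `r`
    (∀ A : Set X, MeasurableSet A → r ⁻¹' A = A → ν A = 0 ∨ ν A = 1) := by
  haveI := hν.1
  constructor
  · -- extreme → ergodic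
    intro hext A hA hrA
    by_contra hcon
    push_neg at hcon
    obtain ⟨h0, h1⟩ := hcon
    have hAfin : ν A ≠ ⊤ := measure_ne_top ν A
    have hc0 : ν Aᶜ ≠ 0 := by
      intro hc
      exact h1 ((prob_compl_eq_zero_iff hA).mp hc)
    have hcfin : ν Aᶜ ≠ ⊤ := measure_ne_top ν Aᶜ
    have hrAc : r ⁻¹' Aᶜ = Aᶜ := by
      rw [Set.preimage_compl, hrA]
    set ν₁ := (ν A)⁻¹ • ν.restrict A with hν₁
    set ν₂ := (ν Aᶜ)⁻¹ • ν.restrict Aᶜ with hν₂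
    have hm₁ : ν₁ ∈ MinvSet r W :=
      RuelleAux.restrict_mem hr_cont hr_fin hW_nonneg hW1 hRW_cont hν hA hrA h0
    have hm₂ : ν₂ ∈ MinvSet r W :=
      RuelleAux.restrict_mem hr_cont hr_fin hW_nonneg hW1 hRW_cont hν hA.compl hrAc hc0
    set a : NNReal := (ν A).toNNReal with ha_def
    set b : NNReal := (ν Aᶜ).toNNReal with hb_def
    have hacoe : (a : ENNReal) = ν A := ENNReal.coe_toNNReal hAfin
    have hbcoe : (b : ENNReal) = ν Aᶜ := ENNReal.coe_toNNReal hcfin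
    have ha : 0 < a := by
      rw [pos_iff_ne_zero]
      intro hz
      apply h0
      rw [← hacoe, hz, ENNReal.coe_zero]
    have hb : 0 < b := by
      rw [pos_iff_ne_zero]
      intro hz
      apply hc0
      rw [← hbcoe, hz, ENNReal.coe_zero]
    have hab : a + b = 1 := by
      have := measure_add_measure_compl (μ := ν) hA
      rw [measure_univ] at this
      apply_fun ENNReal.toNNReal at this
      rwa [ENNReal.toNNReal_add hAfin hcfin] at this
    have hdecomp : ν = a • ν₁ + b • ν₂ := by
      ext s hs
      have hlhs : (a • ν₁ + b • ν₂) s = ν (s ∩ A) + ν (s \ A) := by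
        simp only [Measure.add_apply, Measure.smul_apply, hν₁, hν₂, Measure.smul_apply,
          smul_eq_mul, ENNReal.smul_def, Measure.restrict_apply hs]
        rw [hacoe, hbcoe, ← mul_assoc, ← mul_assoc, ENNReal.mul_inv_cancel h0 hAfin,
          ENNReal.mul_inv_cancel hc0 hcfin, one_mul, one_mul, ← Set.diff_eq]
      rw [hlhs, measure_inter_add_diff s hA]
    have := hext ν₁ hm₁ ν₂ hm₂ a b ha hb hab hdecomp
    have e1 : ν₁ A = 1 := by
      rw [hν₁, Measure.smul_apply, Measure.restrict_apply hA, Set.inter_self,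
        smul_eq_mul, ENNReal.inv_mul_cancel h0 hAfin]
    have e2 : ν₂ A = 0 := by
      rw [hν₂, Measure.smul_apply, Measure.restrict_apply hA, smul_eq_mul]
      simp
    rw [this, e2] at e1
    exact zero_ne_one e1
  · -- ergodic → extreme
    intro herg ν₁ hm₁ ν₂ hm₂ a b ha hb hab hsum
    have hac : ∀ (μ' : Measure X) (c : NNReal), 0 < c →
        (∀ s, ν s = (c : ENNReal) * μ' s + (ν - (c : ENNReal) • μ') s) → True := fun _ _ _ _ => trivial
    have key : ∀ (μ' : Measure X) (c : NNReal) (μ'' : Measure X) (c' : NNReal), 0 < c →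
        ν = c • μ' + c' • μ'' → μ' ≪ ν := by
      intro μ' c μ'' c' hc hsum'
      refine Measure.AbsolutelyContinuous.mk fun s hs hns => ?_
      have : ν s = (c : ENNReal) * μ' s + (c' : ENNReal) * μ'' s := by
        rw [hsum', Measure.add_apply, Measure.smul_apply, Measure.smul_apply,
          ENNReal.smul_def, ENNReal.smul_def, smul_eq_mul, smul_eq_mul]
      rw [hns] at this
      have hz : (c : ENNReal) * μ' s = 0 := by
        have := add_eq_zero.mp this.symm
        exact this.1
      rcases mul_eq_zero.mp hz with h | h
      · exact absurd h (by exact_mod_cast hc.ne')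
      · exact h
    have h1 : ν₁ = ν := RuelleAux.eq_of_ac hr_cont hr_fin hW1 hν herg hm₁
      (key ν₁ a ν₂ b ha hsum)
    have h2 : ν₂ = ν := RuelleAux.eq_of_ac hr_cont hr_fin hW1 hν herg hm₂
      (key ν₂ b ν₁ a hb (by rw [hsum, add_comm]))
    rw [h1, h2]
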